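/- Let n ∈ ℤ and let y : ℝ → ℂ be three times continuously differentiable on [0,1] with i·y‴(x) = (2nπ)³·y(x) for all x ∈ [0,1], and suppose y satisfies the periodic boundary conditions y(1) = y(0), y′(1) = y′(0), y″(1) = y″(0). Then y(x) = y(0)·exp(2nπ·i·x) for all x ∈ [0,1]. In particular, every eigenvalue zₙ = (2nπ)³ of the operator L₀ is simple and the eigenfunctions are uₙ(x) = exp(2nπ·i·x). -/

import Mathlib

open Set Filter Topology

private lemma my_constOn (f : ℝ → ℂ)
    (hf : ∀ x ∈ Icc (0:ℝ) 1, HasDerivWithinAt f 0 (Icc (0:ℝ) 1) x) :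
    ∀ x ∈ Icc (0:ℝ) 1, f x = f 0 := by
  apply constant_of_has_deriv_right_zero
  · exact fun x hx => (hf x hx).continuousWithinAt
  · intro x hx
    refine (hf x (Ico_subset_Icc_self hx)).mono_of_mem_nhdsWithin ?_
    have : Icc x 1 ∈ 𝓝[Ici x] x := by
      rw [← Ici_inter_Iic]
      exact inter_mem_nhdsWithin _ (Iic_mem_nhds hx.2)
    exact Filter.mem_of_superset this (Icc_subset_Icc hx.1 le_rfl)

private lemma my_expSolve (r : ℂ) (f : ℝ → ℂ)
    (hf : ∀ x ∈ Icc (0:ℝ) 1, HasDerivWithinAt f (r * f x) (Icc (0:ℝ) 1) x) :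
    ∀ x ∈ Icc (0:ℝ) 1, f x = f 0 * Complex.exp (r * x) := by
  have hexp : ∀ x : ℝ, HasDerivAt (fun t : ℝ => Complex.exp (-r * t)) (Complex.exp (-r * x) * -r) x := by
    intro x
    have h1 : HasDerivAt (fun t : ℝ => -r * (t : ℂ)) (-r) x := by
      simpa using (Complex.ofRealCLM.hasDerivAt (x := x)).const_mul (-r)
    exact h1.cexp
  have key : ∀ x ∈ Icc (0:ℝ) 1, Complex.exp (-r * x) * f x = f 0 := by
    have h0 : ∀ x ∈ Icc (0:ℝ) 1,
        HasDerivWithinAt (fun t : ℝ => Complex.exp (-r * t) * f t) 0 (Icc (0:ℝ) 1) x := by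
      intro x hx
      have := ((hexp x).hasDerivWithinAt.mul (hf x hx))
      refine this.congr_deriv ?_
      ring
    have := my_constOn _ h0
    intro x hx
    simpa using this x hx
  intro x hx
  have h := key x hx
  have h2 := congrArg (fun z => Complex.exp (r * x) * z) h
  rw [← mul_assoc, ← Complex.exp_add] at h2
  simp only [show r * x + -r * x = 0 by ring, Complex.exp_zero, one_mul] at h2
  rw [h2]; ring

private lemma my_exp_ne_one (z : ℂ) (hz : z.re ≠ 0) : Complex.exp z ≠ 1 := by
  intro h
  have := congrArg (‖·‖) h
  rw [Complex.norm_exp, norm_one] at this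
  rw [show (1:ℝ) = Real.exp 0 by simp, Real.exp_eq_exp] at this
  exact hz this

/-- every periodic eigenfunction of L₀y = i·y‴ for the eigenvalue
(2nπ)³ is a multiple of exp(2nπ·i·x); in particular each eigenvalue zₙ = (2nπ)³
is simple with eigenfunction uₙ(x) = exp(2nπ·i·x). -/
theorem stmt_15 (n : ℤ) (y : ℝ → ℂ)
    (hy : ContDiffOn ℝ 3 y (Set.Icc 0 1))
    (hode : ∀ x ∈ Set.Icc (0 : ℝ) 1,
      Complex.I * iteratedDerivWithin 3 y (Set.Icc 0 1) x = (2 * (n : ℂ) * Real.pi) ^ 3 * y x)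
    (hbc0 : y 1 = y 0)
    (hbc1 : iteratedDerivWithin 1 y (Set.Icc 0 1) 1 = iteratedDerivWithin 1 y (Set.Icc 0 1) 0)
    (hbc2 : iteratedDerivWithin 2 y (Set.Icc 0 1) 1 = iteratedDerivWithin 2 y (Set.Icc 0 1) 0) :
    ∀ x ∈ Set.Icc (0 : ℝ) 1, y x = y 0 * Complex.exp (2 * n * Real.pi * Complex.I * x) := by
  have hs : UniqueDiffOn ℝ (Set.Icc (0:ℝ) 1) := uniqueDiffOn_Icc one_pos
  have hd : ∀ m : ℕ, (m : WithTop ℕ∞) < 3 → ∀ x ∈ Set.Icc (0:ℝ) 1,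
      HasDerivWithinAt (iteratedDerivWithin m y (Set.Icc 0 1))
        (iteratedDerivWithin (m+1) y (Set.Icc 0 1) x) (Set.Icc 0 1) x := by
    intro m hm x hx
    have hdiff := (hy.differentiableOn_iteratedDerivWithin hm hs) x hx
    have := hdiff.hasDerivWithinAt
    rwa [← iteratedDerivWithin_succ] at this
  set Y1 := iteratedDerivWithin 1 y (Set.Icc (0:ℝ) 1) with hY1def
  set Y2 := iteratedDerivWithin 2 y (Set.Icc (0:ℝ) 1) with hY2def
  have hdy : ∀ x ∈ Set.Icc (0:ℝ) 1, HasDerivWithinAt y (Y1 x) (Set.Icc 0 1) x := by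
    intro x hx
    have := hd 0 (by norm_num) x hx
    rwa [iteratedDerivWithin_zero] at this
  have hdy1 : ∀ x ∈ Set.Icc (0:ℝ) 1, HasDerivWithinAt Y1 (Y2 x) (Set.Icc 0 1) x :=
    hd 1 (by norm_num)
  have hdy2 : ∀ x ∈ Set.Icc (0:ℝ) 1, HasDerivWithinAt Y2
      (-Complex.I * (2 * (n : ℂ) * Real.pi) ^ 3 * y x) (Set.Icc 0 1) x := by
    intro x hx
    have h3 := hd 2 (by norm_num) x hx
    have he := hode x hx
    have heq : iteratedDerivWithin 3 y (Set.Icc 0 1) x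
        = -Complex.I * (2 * (n : ℂ) * Real.pi) ^ 3 * y x := by
      linear_combination (-Complex.I) * he + iteratedDerivWithin 3 y (Set.Icc 0 1) x * Complex.I_sq
    rwa [heq] at h3
  rcases eq_or_ne n 0 with hn | hn
  · -- n = 0 case
    subst hn
    have h20 : ∀ x ∈ Set.Icc (0:ℝ) 1, Y2 x = Y2 0 := by
      apply my_constOn
      intro x hx
      have := hdy2 x hx
      simpa using this
    have h1lin : ∀ x ∈ Set.Icc (0:ℝ) 1, Y1 x - Y2 0 * x = Y1 0 - Y2 0 * (0:ℝ) := by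
      apply my_constOn (fun x : ℝ => Y1 x - Y2 0 * x)
      intro x hx
      have hid : HasDerivAt (fun x : ℝ => Y2 0 * (x:ℂ)) (Y2 0) x := by
        simpa using (Complex.ofRealCLM.hasDerivAt (x := x)).const_mul (Y2 0)
      have := (hdy1 x hx).sub hid.hasDerivWithinAt
      rwa [h20 x hx, sub_self] at this
    have hY20 : Y2 0 = 0 := by
      have h1 := h1lin 1 (by norm_num)
      simp only [Complex.ofReal_one, Complex.ofReal_zero, mul_one, mul_zero, sub_zero] at h1
      rw [hbc1] at h1
      exact sub_eq_self.mp h1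
    have h1const : ∀ x ∈ Set.Icc (0:ℝ) 1, Y1 x = Y1 0 := by
      intro x hx
      have := h1lin x hx
      rw [hY20] at this
      simpa using this
    have h0lin : ∀ x ∈ Set.Icc (0:ℝ) 1, y x - Y1 0 * x = y 0 - Y1 0 * (0:ℝ) := by
      apply my_constOn (fun x : ℝ => y x - Y1 0 * x)
      intro x hx
      have hid : HasDerivAt (fun x : ℝ => Y1 0 * (x:ℂ)) (Y1 0) x := by
        simpa using (Complex.ofRealCLM.hasDerivAt (x := x)).const_mul (Y1 0)
      have := (hdy x hx).sub hid.hasDerivWithinAt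
      rwa [h1const x hx, sub_self] at this
    have hY10 : Y1 0 = 0 := by
      have h1 := h0lin 1 (by norm_num)
      simp only [Complex.ofReal_one, Complex.ofReal_zero, mul_one, mul_zero, sub_zero] at h1
      rw [hbc0] at h1
      exact sub_eq_self.mp h1
    intro x hx
    have := h0lin x hx
    rw [hY10] at this
    simp only [zero_mul, sub_zero] at this
    rw [this]
    push_cast
    simp
  ·
    -- n ≠ 0 case
    have hc : (2*(n:ℂ)*Real.pi) ≠ 0 := by
      apply mul_ne_zero (mul_ne_zero two_ne_zero _)
      · exact_mod_cast Real.pi_ne_zero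
      · exact_mod_cast Int.cast_ne_zero.mpr hn
    set t : ℂ := ((Real.sqrt 3 : ℝ) : ℂ) with htdef
    have hs3 : t^2 = 3 := by
      rw [htdef, ← Complex.ofReal_pow, Real.sq_sqrt (by norm_num : (0:ℝ) ≤ 3)]
      norm_num
    have ht0 : t ≠ 0 := by
      rw [htdef]
      exact Complex.ofReal_ne_zero.mpr (ne_of_gt (Real.sqrt_pos.mpr (by norm_num)))
    have key : ∀ r : ℂ, r^3 = -Complex.I * (2*(n:ℂ)*Real.pi)^3 → Complex.exp r ≠ 1 →
        ∀ x ∈ Set.Icc (0:ℝ) 1, Y2 x + r*Y1 x + r^2*y x = 0 := by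
      intro r hr3 hexp
      have hu := my_expSolve r (fun x => Y2 x + r*Y1 x + r^2*y x) (by
        intro x hx
        have := ((hdy2 x hx).add ((hdy1 x hx).const_mul r)).add ((hdy x hx).const_mul (r^2))
        refine this.congr_deriv ?_
        linear_combination -(y x) * hr3)
      have h1 := hu 1 (by norm_num)
      simp only [Complex.ofReal_one, mul_one] at h1
      rw [hbc0, hbc1, hbc2] at h1
      have hu0 : Y2 0 + r*Y1 0 + r^2*y 0 = 0 := by
        have h2 : (Y2 0 + r*Y1 0 + r^2*y 0) * (Complex.exp r - 1) = 0 := by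
          linear_combination -h1
        rcases mul_eq_zero.mp h2 with h | h
        · exact h
        · exact absurd (sub_eq_zero.mp h) hexp
      intro x hx
      have hx' := hu x hx
      rw [hx', hu0, zero_mul]
    set r2 : ℂ := Complex.I*(2*(n:ℂ)*Real.pi)*(-1/2 + t/2*Complex.I) with hr2def
    set r3 : ℂ := Complex.I*(2*(n:ℂ)*Real.pi)*(-1/2 - t/2*Complex.I) with hr3def
    have hw3 : (-1/2 + t/2*Complex.I)^3 = 1 := by
      linear_combination ((-3*Complex.I^2 - t*Complex.I + t*Complex.I*(Complex.I^2+1))/8) * hs3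
        + ((-9 + 3*t*Complex.I)/8) * Complex.I_sq
    have hw3' : (-1/2 - t/2*Complex.I)^3 = 1 := by
      linear_combination ((-3*Complex.I^2 + t*Complex.I - t*Complex.I*(Complex.I^2+1))/8) * hs3
        + ((-9 - 3*t*Complex.I)/8) * Complex.I_sq
    have hIc3 : (Complex.I*(2*(n:ℂ)*Real.pi))^3 = -Complex.I * (2*(n:ℂ)*Real.pi)^3 := by
      linear_combination (Complex.I*(2*(n:ℂ)*Real.pi)^3) * Complex.I_sq
    have hr2cube : r2^3 = -Complex.I * (2*(n:ℂ)*Real.pi)^3 := by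
      have e : r2^3 = (Complex.I*(2*(n:ℂ)*Real.pi))^3 * ((-1/2 + t/2*Complex.I)^3) := by
        rw [hr2def]; ring
      rw [e, hw3, mul_one, hIc3]
    have hr3cube : r3^3 = -Complex.I * (2*(n:ℂ)*Real.pi)^3 := by
      have e : r3^3 = (Complex.I*(2*(n:ℂ)*Real.pi))^3 * ((-1/2 - t/2*Complex.I)^3) := by
        rw [hr3def]; ring
      rw [e, hw3', mul_one, hIc3]
    have hb0 : (2*(n:ℝ)*Real.pi) ≠ 0 :=
      mul_ne_zero (mul_ne_zero two_ne_zero (Int.cast_ne_zero.mpr hn)) Real.pi_ne_zero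
    have hcR : (2*(n:ℂ)*Real.pi) = ((2*(n:ℝ)*Real.pi : ℝ):ℂ) := by push_cast; ring
    have hre2 : r2.re = -((2*(n:ℝ)*Real.pi) * (Real.sqrt 3)/2) := by
      rw [hr2def, hcR, htdef]
      simp [Complex.mul_re, Complex.mul_im, Complex.div_re, Complex.div_im]
      ring
    have hre3 : r3.re = (2*(n:ℝ)*Real.pi) * (Real.sqrt 3)/2 := by
      rw [hr3def, hcR, htdef]
      simp [Complex.mul_re, Complex.mul_im, Complex.div_re, Complex.div_im]
      ring
    have hsqrt3 : Real.sqrt 3 ≠ 0 := ne_of_gt (Real.sqrt_pos.mpr (by norm_num))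
    have hexp2 : Complex.exp r2 ≠ 1 := by
      apply my_exp_ne_one
      rw [hre2]
      simp only [ne_eq, neg_eq_zero, div_eq_zero_iff]
      push_neg
      exact ⟨mul_ne_zero hb0 hsqrt3, by norm_num⟩
    have hexp3 : Complex.exp r3 ≠ 1 := by
      apply my_exp_ne_one
      rw [hre3]
      simp only [ne_eq, div_eq_zero_iff]
      push_neg
      exact ⟨mul_ne_zero hb0 hsqrt3, by norm_num⟩
    have h2all := key r2 hr2cube hexp2
    have h3all := key r3 hr3cube hexp3
    have hsum : r2 + r3 = -(Complex.I*(2*(n:ℂ)*Real.pi)) := by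
      rw [hr2def, hr3def]; ring
    have hdif : r2 - r3 = -(t*(2*(n:ℂ)*Real.pi)) := by
      rw [hr2def, hr3def]
      linear_combination (t*(2*(n:ℂ)*Real.pi)) * Complex.I_sq
    have hdifne : r2 - r3 ≠ 0 := by
      rw [hdif]
      exact neg_ne_zero.mpr (mul_ne_zero ht0 hc)
    have hY1eq : ∀ x ∈ Set.Icc (0:ℝ) 1, Y1 x = Complex.I*(2*(n:ℂ)*Real.pi)*y x := by
      intro x hx
      have h2x := h2all x hx
      have h3x := h3all x hx
      have e1 : (r2-r3)*(Y1 x - Complex.I*(2*(n:ℂ)*Real.pi)*y x) = 0 := by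
        linear_combination h2x - h3x - (y x)*(r2-r3)*hsum
      have := (mul_eq_zero.mp e1).resolve_left hdifne
      exact sub_eq_zero.mp this
    have final := my_expSolve (Complex.I*(2*(n:ℂ)*Real.pi)) y (by
      intro x hx
      have h := hdy x hx
      rwa [hY1eq x hx] at h)
    intro x hx
    rw [final x hx]
    congr 1
    ring
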